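/- (Asymptotic lower bound, Theorem 1) Let (θ̂_n, M_n) be a sequence of adaptive estimators on n copies of ρ_θ that is asymptotically unbiased at θ (bias B_n → 0 and derivative of expectation A_n → I), with invertible Fisher information matrices. If the limit inferior of n·V_θ[θ̂_n, M_n] exists, then liminf_{n→∞} n Tr(G V_θ[θ̂_n, M_n]) ≥ C_θ(G), where C_θ(G) is the single-copy quasi-quantum Cramér-Rao bound and G ⪰ 0. -/

import Mathlib

open Filter Matrix
open scoped MatrixOrder

private lemma trace_nonneg_of_psd {m : ℕ} {M : Matrix (Fin m) (Fin m) ℝ}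
    (h : M.PosSemidef) : 0 ≤ M.trace := by
  rw [Matrix.trace]
  refine Finset.sum_nonneg fun i _ => ?_
  exact h.diag_nonneg

private lemma trace_mul_nonneg_of_psd {m : ℕ} {P Q : Matrix (Fin m) (Fin m) ℝ}
    (hP : P.PosSemidef) (hQ : Q.PosSemidef) : 0 ≤ (P * Q).trace := by
  have h1 : P = CFC.sqrt P * CFC.sqrt P := (CFC.sqrt_mul_sqrt_self P hP.nonneg).symm
  have hsqrtH : (CFC.sqrt P)ᴴ = CFC.sqrt P := (CFC.sqrt_nonneg P).posSemidef.1
  have h2 : (P * Q).trace = ((CFC.sqrt P)ᴴ * Q * CFC.sqrt P).trace := by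
    rw [hsqrtH]
    conv_lhs => rw [h1]
    rw [Matrix.mul_assoc, Matrix.trace_mul_comm, Matrix.mul_assoc, ← Matrix.mul_assoc]
  rw [h2]
  exact trace_nonneg_of_psd (hQ.conjTranspose_mul_mul_same _)

theorem asymptotic_lower_bound_adaptive {m : ℕ} {ι : Type*} [Nonempty ι]
    (Js : ι → Matrix (Fin m) (Fin m) ℝ) (hJs : ∀ i, (Js i).PosDef)
    (C : Matrix (Fin m) (Fin m) ℝ → ℝ)
    (hC : ∀ G, C G = ⨅ i, (G * (Js i)⁻¹).trace)
    (G : Matrix (Fin m) (Fin m) ℝ) (hG : G.PosSemidef)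
    (V A Jn : ℕ → Matrix (Fin m) (Fin m) ℝ)
    (hJn : ∀ n, 1 ≤ n → (Jn n).PosDef)
    (hCR : ∀ n, 1 ≤ n → (V n - A n * (Jn n)⁻¹ * (A n)ᵀ).PosSemidef)
    (hAvg : ∀ n, 1 ≤ n → ∃ i : ι, Jn n = (n : ℝ) • Js i)
    (hA : Tendsto A atTop (nhds 1))
    (hCont : Tendsto (fun n => C ((A n)ᵀ * G * A n)) atTop (nhds (C G)))
    (hBdd : IsBoundedUnder (· ≤ ·) atTop (fun n : ℕ => (n : ℝ) * (G * V n).trace)) :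
    C G ≤ liminf (fun n : ℕ => (n : ℝ) * (G * V n).trace) atTop := by
  -- key pointwise inequality for n ≥ 1
  have key : ∀ n, 1 ≤ n → C ((A n)ᵀ * G * A n) ≤ (n : ℝ) * (G * V n).trace := by
    intro n hn
    obtain ⟨i, hi⟩ := hAvg n hn
    have hn0 : (n : ℝ) ≠ 0 := Nat.cast_ne_zero.mpr (by omega)
    haveI : Invertible (n : ℝ) := invertibleOfNonzero hn0
    have hdet : IsUnit (Js i).det := isUnit_iff_ne_zero.mpr (ne_of_gt (hJs i).det_pos)
    have hinv : (Jn n)⁻¹ = (n : ℝ)⁻¹ • (Js i)⁻¹ := by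
      rw [hi, Matrix.inv_smul (A := Js i) (n : ℝ) hdet, invOf_eq_inv]
    have hJinvPSD : ((Js i)⁻¹).PosSemidef := (hJs i).inv.posSemidef
    have hAGA : ((A n)ᵀ * G * (A n)).PosSemidef := by
      have := hG.conjTranspose_mul_mul_same (A n)
      simpa [Matrix.conjTranspose_eq_transpose_of_trivial] using this
    -- step 1: C (AᵀGA) ≤ Tr(AᵀGA * (Js i)⁻¹)
    have step1 : C ((A n)ᵀ * G * A n) ≤ (((A n)ᵀ * G * A n) * (Js i)⁻¹).trace := by
      rw [hC]
      refine ciInf_le ⟨0, ?_⟩ i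
      rintro x ⟨j, rfl⟩
      exact trace_mul_nonneg_of_psd hAGA ((hJs j).inv.posSemidef)
    -- step 2: Tr(AᵀGA * (Js i)⁻¹) = n * Tr(G * (A (Jn n)⁻¹ Aᵀ))
    have step2 : (((A n)ᵀ * G * A n) * (Js i)⁻¹).trace
        = (n : ℝ) * (G * (A n * (Jn n)⁻¹ * (A n)ᵀ)).trace := by
      have h3 : (((A n)ᵀ * G * A n) * (Js i)⁻¹).trace
          = (G * (A n * (Js i)⁻¹ * (A n)ᵀ)).trace := by
        rw [show (A n)ᵀ * G * A n * (Js i)⁻¹ = (A n)ᵀ * (G * A n * (Js i)⁻¹) by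
            simp only [Matrix.mul_assoc],
          Matrix.trace_mul_comm ((A n)ᵀ) (G * A n * (Js i)⁻¹)]
        simp only [Matrix.mul_assoc]
      rw [h3, hinv, show A n * ((n : ℝ)⁻¹ • (Js i)⁻¹) * (A n)ᵀ
            = (n : ℝ)⁻¹ • (A n * (Js i)⁻¹ * (A n)ᵀ) by
          rw [Matrix.mul_smul, Matrix.smul_mul],
        Matrix.mul_smul, Matrix.trace_smul, smul_eq_mul]
      simp only [Matrix.mul_assoc]
      field_simp
    -- step 3: Tr(G * (A (Jn n)⁻¹ Aᵀ)) ≤ Tr(G * V n)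
    have step3 : (G * (A n * (Jn n)⁻¹ * (A n)ᵀ)).trace ≤ (G * V n).trace := by
      have h0 : 0 ≤ (G * (V n - A n * (Jn n)⁻¹ * (A n)ᵀ)).trace :=
        trace_mul_nonneg_of_psd hG (hCR n hn)
      rw [Matrix.mul_sub, Matrix.trace_sub] at h0
      linarith
    calc C ((A n)ᵀ * G * A n) ≤ (((A n)ᵀ * G * A n) * (Js i)⁻¹).trace := step1
      _ = (n : ℝ) * (G * (A n * (Jn n)⁻¹ * (A n)ᵀ)).trace := step2
      _ ≤ (n : ℝ) * (G * V n).trace := by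
          have hnpos : (0 : ℝ) < n := by exact_mod_cast Nat.lt_of_lt_of_le Nat.zero_lt_one hn
          exact mul_le_mul_of_nonneg_left step3 (le_of_lt hnpos)
  have hev : ∀ᶠ n in atTop, C ((A n)ᵀ * G * A n) ≤ (n : ℝ) * (G * V n).trace :=
    (eventually_ge_atTop 1).mono fun n hn => key n hn
  have h1 : liminf (fun n => C ((A n)ᵀ * G * A n)) atTop = C G := hCont.liminf_eq
  calc C G = liminf (fun n => C ((A n)ᵀ * G * A n)) atTop := h1.symm
    _ ≤ liminf (fun n : ℕ => (n : ℝ) * (G * V n).trace) atTop :=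
        liminf_le_liminf hev hCont.isBoundedUnder_ge hBdd.isCoboundedUnder_ge
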